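/- arXiv:2602.01260 — 3 statements merged into one kernel-verified Lean document; each statement's English description precedes it below -/
import Mathlib

section
/- Let S be a measurable space, γ ∈ [0,1), P and P' Markov kernels from S to S, and r, r' : S → ℝ bounded measurable reward functions. Define value functions V(s) = Σ_{t=0}^∞ γ^t ∫ r(s') (P^t)(s, ds') and V'(s) = Σ_{t=0}^∞ γ^t ∫ r'(s') (P'^t)(s, ds'), where P^t denotes the t-fold composition of the kernel P (with P^0 the identity kernel), and the Bellman operator (T' f)(s) = r'(s) + γ ∫ f(s') P'(s, ds'). Let ρ be a probability measure on S, set J = ∫ V dρ and J' = ∫ V' dρ, and let d_ρ be the discounted state-visitation measure d_ρ = (1−γ)·Σ_{t=0}^∞ γ^t · (ρ pushed forward through t steps of P'). Then J' − J = (1/(1−γ)) · ∫ ( (T' V)(s) − V(s) ) d_ρ(ds). -/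
open MeasureTheory ProbabilityTheory

/-- `t`-fold composition of a Markov kernel, with `kiter P 0` the identity kernel. -/
noncomputable def kiter {S : Type*} [MeasurableSpace S] (P : Kernel S S) : ℕ → Kernel S S
  | 0 => Kernel.id
  | n + 1 => (kiter P n).comp P

/-- Discounted value function `V(s) = Σ_t γ^t ∫ r dP^t(s,·)`. -/
noncomputable def valueFn {S : Type*} [MeasurableSpace S] (γ : ℝ) (P : Kernel S S)
    (r : S → ℝ) : S → ℝ :=
  fun s => ∑' t : ℕ, γ ^ t * ∫ s', r s' ∂((kiter P t) s)

/-- Discounted state-visitation measure `d_ρ = (1-γ) Σ_t γ^t (ρ pushed through t steps of P)`. -/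
noncomputable def dvisit {S : Type*} [MeasurableSpace S] (γ : ℝ) (P : Kernel S S)
    (ρ : Measure S) : Measure S :=
  ENNReal.ofReal (1 - γ) • Measure.sum (fun t : ℕ => ENNReal.ofReal (γ ^ t) • ρ.bind (kiter P t))

section Aux

variable {S : Type*} [MeasurableSpace S]

instance kiter_isMarkov (P : Kernel S S) [IsMarkovKernel P] (n : ℕ) :
    IsMarkovKernel (kiter P n) := by
  induction n with
  | zero => rw [kiter]; infer_instance
  | succ n ih => rw [kiter]; infer_instance

lemma kiter_succ_comm (P : Kernel S S) [IsMarkovKernel P] (n : ℕ) :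
    kiter P (n + 1) = P.comp (kiter P n) := by
  induction n with
  | zero =>
    show Kernel.id.comp P = P.comp Kernel.id
    rw [Kernel.id_comp, Kernel.comp_id]
  | succ n ih =>
    show (kiter P (n + 1)).comp P = P.comp (kiter P (n + 1))
    conv_lhs => rw [ih]
    rw [Kernel.comp_assoc]
    rfl

/-- integrability of a bounded strongly measurable function on a finite measure. -/
lemma integrable_of_bounded {μ : Measure S} [IsFiniteMeasure μ] {f : S → ℝ}
    (hf : AEStronglyMeasurable f μ) {C : ℝ} (hC : ∀ s, |f s| ≤ C) : Integrable f μ :=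
  (integrable_const C).mono' hf (Filter.Eventually.of_forall fun s => by
    simpa [Real.norm_eq_abs] using hC s)

lemma abs_integral_le_of_abs_le {μ : Measure S} [IsProbabilityMeasure μ] {f : S → ℝ}
    {C : ℝ} (hC : ∀ s, |f s| ≤ C) : |∫ s, f s ∂μ| ≤ C := by
  rw [← Real.norm_eq_abs]
  calc ‖∫ s, f s ∂μ‖ ≤ C * (μ Set.univ).toReal :=
        norm_integral_le_of_norm_le_const
          (Filter.Eventually.of_forall fun s => by
            simpa [Real.norm_eq_abs] using hC s)
    _ = C := by simp

lemma bind_is_prob (μ : Measure S) [IsProbabilityMeasure μ] (κ : Kernel S S)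
    [IsMarkovKernel κ] : IsProbabilityMeasure (μ.bind ⇑κ) := by
  constructor
  rw [Measure.bind_apply MeasurableSet.univ κ.measurable.aemeasurable]
  simp

/-- Integral against a measure bound with a kernel. -/
lemma integral_bind_kernel (μ : Measure S) [IsProbabilityMeasure μ] (κ : Kernel S S)
    [IsMarkovKernel κ] {f : S → ℝ} (hf : StronglyMeasurable f) {C : ℝ}
    (hC : ∀ s, |f s| ≤ C) :
    ∫ x, f x ∂(μ.bind ⇑κ) = ∫ a, ∫ b, f b ∂(κ a) ∂μ := by
  have hmap : μ.bind ⇑κ = (μ.compProd κ).map Prod.snd := by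
    ext s hs
    rw [Measure.bind_apply hs κ.measurable.aemeasurable, Measure.map_apply measurable_snd hs,
      Measure.compProd_apply (measurable_snd hs)]
    rfl
  have hmeas : AEStronglyMeasurable (fun p : S × S => f p.2) (μ.compProd κ) :=
    (hf.comp_measurable measurable_snd).aestronglyMeasurable
  have hint : Integrable (fun p : S × S => f p.2) (μ.compProd κ) :=
    (integrable_const C).mono' hmeas (Filter.Eventually.of_forall fun p => by
      simpa [Real.norm_eq_abs] using hC p.2)
  rw [hmap, integral_map measurable_snd.aemeasurable hf.aestronglyMeasurable]
  exact Measure.integral_compProd hint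

lemma sm_integral_kernel (κ : Kernel S S) [IsSFiniteKernel κ] {f : S → ℝ}
    (hf : StronglyMeasurable f) : StronglyMeasurable fun s => ∫ b, f b ∂(κ s) :=
  (hf.comp_measurable measurable_snd :
    StronglyMeasurable fun p : S × S => f p.2).integral_kernel_prod_right'

/-- swap a tsum and an integral for geometrically bounded functions. -/
lemma tsum_integral_swap {γ : ℝ} (hγ0 : 0 ≤ γ) (hγ1 : γ < 1) (μ : Measure S)
    [IsProbabilityMeasure μ] {f : ℕ → S → ℝ} (hfm : ∀ t, StronglyMeasurable (f t))
    {C : ℝ} (hC : 0 ≤ C) (hbd : ∀ t s, |f t s| ≤ C * γ ^ t) :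
    ∫ s, ∑' t, f t s ∂μ = ∑' t, ∫ s, f t s ∂μ := by
  refine integral_tsum (fun t => (hfm t).aestronglyMeasurable) ?_
  have h1 : ∀ t, ∫⁻ a, ‖f t a‖₊ ∂μ ≤ ENNReal.ofReal C * ENNReal.ofReal γ ^ t := by
    intro t
    calc ∫⁻ a, (‖f t a‖₊ : ENNReal) ∂μ
        ≤ ∫⁻ _, ENNReal.ofReal (C * γ ^ t) ∂μ := by
          refine lintegral_mono fun a => ?_
          rw [← ENNReal.ofReal_coe_nnreal, coe_nnnorm]
          exact ENNReal.ofReal_le_ofReal (by simpa [Real.norm_eq_abs] using hbd t a)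
      _ = ENNReal.ofReal (C * γ ^ t) := by simp
      _ = ENNReal.ofReal C * ENNReal.ofReal γ ^ t := by
          rw [ENNReal.ofReal_mul hC, ENNReal.ofReal_pow hγ0]
  refine ne_of_lt (lt_of_le_of_lt (ENNReal.tsum_le_tsum h1) ?_)
  rw [ENNReal.tsum_mul_left, ENNReal.tsum_geometric]
  have hlt : ENNReal.ofReal γ < 1 := by
    rw [← ENNReal.ofReal_one]
    exact ENNReal.ofReal_lt_ofReal_iff one_pos |>.mpr hγ1
  exact ENNReal.mul_lt_top ENNReal.ofReal_lt_top
    (ENNReal.inv_lt_top.mpr (tsub_pos_of_lt hlt))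

lemma tsum_telescope' {c : ℕ → ℝ} (h : Filter.Tendsto c Filter.atTop (nhds 0))
    (hs : Summable fun t => c (t + 1) - c t) : ∑' t, (c (t + 1) - c t) = -c 0 := by
  have h1 := hs.hasSum.tendsto_sum_nat
  have h2 : Filter.Tendsto (fun n => ∑ i ∈ Finset.range n, (c (i + 1) - c i))
      Filter.atTop (nhds (0 - c 0)) := by
    simp only [Finset.sum_range_sub]
    exact h.sub tendsto_const_nhds
  have := tendsto_nhds_unique h1 h2
  rw [this]; ring

section ValueFn

variable {γ : ℝ} (P : Kernel S S) [IsMarkovKernel P] {r : S → ℝ} {Cr : ℝ}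

lemma G_sm (hr : Measurable r) (t : ℕ) : StronglyMeasurable fun s => ∫ s', r s' ∂((kiter P t) s) :=
  sm_integral_kernel (kiter P t) hr.stronglyMeasurable

lemma G_bd (hCr : ∀ s, |r s| ≤ Cr) (t : ℕ) (s : S) : |∫ s', r s' ∂((kiter P t) s)| ≤ Cr :=
  abs_integral_le_of_abs_le hCr

lemma term_bd (hγ0 : 0 ≤ γ) (hCr : ∀ s, |r s| ≤ Cr) (t : ℕ) (s : S) : |γ ^ t * ∫ s', r s' ∂((kiter P t) s)| ≤ Cr * γ ^ t := by
  rw [abs_mul, abs_pow, abs_of_nonneg hγ0, mul_comm]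
  exact mul_le_mul_of_nonneg_right (G_bd P hCr t s) (pow_nonneg hγ0 t)

lemma summable_val (hγ0 : 0 ≤ γ) (hγ1 : γ < 1) (hCr : ∀ s, |r s| ≤ Cr) (s : S) :
    Summable fun t : ℕ => γ ^ t * ∫ s', r s' ∂((kiter P t) s) := by
  have hCr0 : 0 ≤ Cr := le_trans (abs_nonneg _) (hCr s)
  refine Summable.of_norm_bounded (g := fun t => Cr * γ ^ t)
    ((summable_geometric_of_lt_one hγ0 hγ1).mul_left Cr) fun t => ?_
  rw [Real.norm_eq_abs]
  exact term_bd P hγ0 hCr t s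

lemma val_bd (hγ0 : 0 ≤ γ) (hγ1 : γ < 1) (hCr : ∀ s, |r s| ≤ Cr) (s : S) : |valueFn γ P r s| ≤ Cr / (1 - γ) := by
  have hCr0 : 0 ≤ Cr := le_trans (abs_nonneg _) (hCr s)
  rw [valueFn, ← Real.norm_eq_abs, div_eq_mul_inv]
  have hsum : Summable fun t : ℕ =>
      ‖γ ^ t * ∫ s', r s' ∂((kiter P t) s)‖ := by
    refine Summable.of_nonneg_of_le (fun t => norm_nonneg _)
      (fun t => by rw [Real.norm_eq_abs]; exact term_bd P hγ0 hCr t s)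
      ((summable_geometric_of_lt_one hγ0 hγ1).mul_left Cr)
  calc ‖∑' t : ℕ, γ ^ t * ∫ s', r s' ∂((kiter P t) s)‖
      ≤ ∑' t : ℕ, ‖γ ^ t * ∫ s', r s' ∂((kiter P t) s)‖ := norm_tsum_le_tsum_norm hsum
    _ ≤ ∑' t : ℕ, Cr * γ ^ t := by
        refine Summable.tsum_le_tsum (fun t => ?_) hsum
          ((summable_geometric_of_lt_one hγ0 hγ1).mul_left Cr)
        rw [Real.norm_eq_abs]; exact term_bd P hγ0 hCr t s
    _ = Cr * (1 - γ)⁻¹ := by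
        rw [tsum_mul_left, tsum_geometric_of_lt_one hγ0 hγ1]

lemma val_sm (hγ0 : 0 ≤ γ) (hγ1 : γ < 1) (hr : Measurable r) (hCr : ∀ s, |r s| ≤ Cr) :
    StronglyMeasurable (valueFn γ P r) := by
  refine stronglyMeasurable_of_tendsto Filter.atTop
    (f := fun n s => ∑ t ∈ Finset.range n, γ ^ t * ∫ s', r s' ∂((kiter P t) s))
    (fun n => Finset.stronglyMeasurable_fun_sum _ fun t _ =>
      (stronglyMeasurable_const.mul (G_sm P hr t))) ?_
  rw [tendsto_pi_nhds]
  intro s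
  exact (summable_val P hγ0 hγ1 hCr s).hasSum.tendsto_sum_nat

/-- The Bellman equation for `valueFn`. -/
lemma bellman (hγ0 : 0 ≤ γ) (hγ1 : γ < 1) (hr : Measurable r) (hCr : ∀ s, |r s| ≤ Cr) (s : S) :
    valueFn γ P r s = r s + γ * ∫ s', valueFn γ P r s' ∂(P s) := by
  have hsum := summable_val P hγ0 hγ1 hCr s
  rw [valueFn, hsum.tsum_eq_zero_add]
  have h0 : γ ^ 0 * ∫ s', r s' ∂((kiter P 0) s) = r s := by
    rw [pow_zero, one_mul, show kiter P 0 = Kernel.id from rfl, Kernel.id_apply,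
      integral_dirac' _ _ hr.stronglyMeasurable]
  rw [h0]
  congr 1
  have hstep : ∀ t, ∫ s', r s' ∂((kiter P (t + 1)) s)
      = ∫ a, ∫ s', r s' ∂((kiter P t) a) ∂(P s) := by
    intro t
    rw [show kiter P (t + 1) = (kiter P t).comp P from rfl, Kernel.comp_apply]
    exact integral_bind_kernel (P s) (kiter P t) hr.stronglyMeasurable hCr
  calc ∑' t : ℕ, γ ^ (t + 1) * ∫ s', r s' ∂((kiter P (t + 1)) s)
      = ∑' t : ℕ, γ * (γ ^ t * ∫ a, ∫ s', r s' ∂((kiter P t) a) ∂(P s)) := by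
        exact tsum_congr fun t => by rw [hstep t, pow_succ]; ring
    _ = γ * ∑' t : ℕ, γ ^ t * ∫ a, ∫ s', r s' ∂((kiter P t) a) ∂(P s) := tsum_mul_left
    _ = γ * ∑' t : ℕ, ∫ a, γ ^ t * ∫ s', r s' ∂((kiter P t) a) ∂(P s) := by
        congr 1
        exact tsum_congr fun t => (integral_const_mul _ _).symm
    _ = γ * ∫ a, ∑' t : ℕ, γ ^ t * ∫ s', r s' ∂((kiter P t) a) ∂(P s) := by
        congr 1
        refine (tsum_integral_swap hγ0 hγ1 (P s)
          (fun t => stronglyMeasurable_const.mul (G_sm P hr t))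
          (C := |Cr|) (abs_nonneg _) (fun t a => ?_)).symm
        exact le_trans (term_bd P hγ0 hCr t a)
          (mul_le_mul_of_nonneg_right (le_abs_self Cr) (pow_nonneg hγ0 t))
    _ = γ * ∫ a, valueFn γ P r a ∂(P s) := rfl

end ValueFn

end Aux

/-- Performance Difference Lemma: with `J = ∫ V dρ`, `J' = ∫ V' dρ` and
`(T' f)(s) = r'(s) + γ ∫ f dP'(s,·)`, one has
`J' − J = (1/(1−γ)) ∫ ((T' V)(s) − V(s)) d_ρ(ds)` where `d_ρ` is the discounted
state-visitation measure of `P'` started from `ρ`. -/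
theorem stmt4 {S : Type*} [MeasurableSpace S]
    (γ : ℝ) (hγ : γ ∈ Set.Ico (0 : ℝ) 1)
    (P P' : Kernel S S) [IsMarkovKernel P] [IsMarkovKernel P']
    (r r' : S → ℝ) (hrmeas : Measurable r) (hr'meas : Measurable r')
    (Cr : ℝ) (hrbd : ∀ s, |r s| ≤ Cr) (Cr' : ℝ) (hr'bd : ∀ s, |r' s| ≤ Cr')
    (ρ : Measure S) [IsProbabilityMeasure ρ] :
    (∫ s, valueFn γ P' r' s ∂ρ) - ∫ s, valueFn γ P r s ∂ρ
      = (1 / (1 - γ)) *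
        ∫ s, ((r' s + γ * ∫ s', valueFn γ P r s' ∂(P' s)) - valueFn γ P r s)
          ∂(dvisit γ P' ρ) := by
  obtain ⟨hγ0, hγ1⟩ := hγ
  have h1γ : (0 : ℝ) < 1 - γ := by linarith
  -- S is nonempty
  have hne : Nonempty S := by
    by_contra h
    rw [not_nonempty_iff] at h
    have := measure_univ (μ := ρ)
    simp [Set.univ_eq_empty_iff.mpr h] at this
  obtain ⟨s₀⟩ := hne
  have hCr0 : 0 ≤ Cr := le_trans (abs_nonneg _) (hrbd s₀)
  have hCr'0 : 0 ≤ Cr' := le_trans (abs_nonneg _) (hr'bd s₀)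
  set V : S → ℝ := valueFn γ P r with hV
  set M : ℝ := Cr / (1 - γ) with hM
  have hM0 : 0 ≤ M := div_nonneg hCr0 (le_of_lt h1γ)
  have hVsm : StronglyMeasurable V := val_sm P hγ0 hγ1 hrmeas hrbd
  have hVbd : ∀ s, |V s| ≤ M := fun s => val_bd P hγ0 hγ1 hrbd s
  -- the advantage function
  set h : S → ℝ := fun s => (r' s + γ * ∫ s', V s' ∂(P' s)) - V s with hh
  have hPVsm : StronglyMeasurable fun s => ∫ s', V s' ∂(P' s) :=
    sm_integral_kernel P' hVsm
  have hhsm : StronglyMeasurable h :=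
    (hr'meas.stronglyMeasurable.add (stronglyMeasurable_const.mul hPVsm)).sub hVsm
  set Ch : ℝ := Cr' + γ * M + M with hCh
  have hhbd : ∀ s, |h s| ≤ Ch := by
    intro s
    have h1 : |∫ s', V s' ∂(P' s)| ≤ M := abs_integral_le_of_abs_le hVbd
    calc |h s| ≤ |r' s + γ * ∫ s', V s' ∂(P' s)| + |V s| := abs_sub _ _
      _ ≤ (|r' s| + |γ * ∫ s', V s' ∂(P' s)|) + |V s| := by
          gcongr; exact abs_add_le _ _
      _ ≤ (Cr' + γ * M) + M := by
          gcongr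
          · exact hr'bd s
          · rw [abs_mul, abs_of_nonneg hγ0]
            exact mul_le_mul_of_nonneg_left h1 hγ0
          · exact hVbd s
  have hCh0 : 0 ≤ Ch := le_trans (abs_nonneg _) (hhbd s₀)
  -- visitation measures
  set μ : ℕ → Measure S := fun t => ρ.bind ⇑(kiter P' t) with hμ
  have hμprob : ∀ t, IsProbabilityMeasure (μ t) := fun t => bind_is_prob ρ (kiter P' t)
  have hμ0 : μ 0 = ρ := by
    show ρ.bind ⇑(kiter P' 0) = ρ
    have : ⇑(kiter P' 0) = fun s : S => Measure.dirac s := by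
      funext s; exact Kernel.id_apply s
    rw [this]
    exact Measure.bind_dirac
  have hμsucc : ∀ t, μ (t + 1) = (μ t).bind ⇑P' := by
    intro t
    show ρ.bind ⇑(kiter P' (t + 1)) = (ρ.bind ⇑(kiter P' t)).bind ⇑P'
    have h1 : ⇑(kiter P' (t + 1)) = fun a : S => ((kiter P' t) a).bind ⇑P' := by
      rw [kiter_succ_comm]
      funext a
      exact Kernel.comp_apply P' (kiter P' t) a
    rw [h1, ← Measure.bind_bind (kiter P' t).measurable.aemeasurable P'.measurable.aemeasurable]
  -- abbreviations
  set A : ℕ → ℝ := fun t => ∫ s, r' s ∂(μ t) with hA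
  set B : ℕ → ℝ := fun t => ∫ s, V s ∂(μ t) with hB
  have hAbd : ∀ t, |A t| ≤ Cr' := fun t => by
    haveI := hμprob t; exact abs_integral_le_of_abs_le hr'bd
  have hBbd : ∀ t, |B t| ≤ M := fun t => by
    haveI := hμprob t; exact abs_integral_le_of_abs_le hVbd
  -- integral of h against μ t
  have hint_h : ∀ t, ∫ s, h s ∂(μ t) = A t + γ * B (t + 1) - B t := by
    intro t
    haveI := hμprob t
    have hi1 : Integrable r' (μ t) :=
      integrable_of_bounded hr'meas.stronglyMeasurable.aestronglyMeasurable hr'bd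
    have hi2 : Integrable (fun s => γ * ∫ s', V s' ∂(P' s)) (μ t) := by
      refine integrable_of_bounded
        (stronglyMeasurable_const.mul hPVsm).aestronglyMeasurable (C := γ * M) fun s => ?_
      rw [abs_mul, abs_of_nonneg hγ0]
      exact mul_le_mul_of_nonneg_left (abs_integral_le_of_abs_le hVbd) hγ0
    have hi3 : Integrable V (μ t) :=
      integrable_of_bounded hVsm.aestronglyMeasurable hVbd
    have hPV : ∫ s, (∫ s', V s' ∂(P' s)) ∂(μ t) = B (t + 1) := by
      show _ = ∫ s, V s ∂(μ (t + 1))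
      rw [hμsucc t]
      exact (integral_bind_kernel (μ t) P' hVsm hVbd).symm
    have hi12 : Integrable (fun s => r' s + γ * ∫ s', V s' ∂(P' s)) (μ t) := hi1.add hi2
    rw [hh]
    rw [integral_sub hi12 hi3, integral_add hi1 hi2, integral_const_mul, hPV]
  -- J' as a series
  have hJ' : ∫ s, valueFn γ P' r' s ∂ρ = ∑' t : ℕ, γ ^ t * A t := by
    have hswap : ∫ s, ∑' t : ℕ, γ ^ t * ∫ s', r' s' ∂((kiter P' t) s) ∂ρ
        = ∑' t : ℕ, ∫ s, γ ^ t * ∫ s', r' s' ∂((kiter P' t) s) ∂ρ := by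
      refine tsum_integral_swap hγ0 hγ1 ρ
        (fun t => stronglyMeasurable_const.mul (G_sm P' hr'meas t)) (C := Cr') hCr'0
        (fun t s => term_bd P' hγ0 hr'bd t s)
    rw [show (fun s => valueFn γ P' r' s) = fun s =>
      ∑' t : ℕ, γ ^ t * ∫ s', r' s' ∂((kiter P' t) s) from rfl, hswap]
    refine tsum_congr fun t => ?_
    rw [integral_const_mul]
    congr 1
    show _ = ∫ s, r' s ∂(μ t)
    exact (integral_bind_kernel ρ (kiter P' t) hr'meas.stronglyMeasurable hr'bd).symm
  -- J = B 0
  have hJ : ∫ s, V s ∂ρ = B 0 := by show _ = ∫ s, V s ∂(μ 0); rw [hμ0]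
  -- summabilities
  have hsumA : Summable fun t : ℕ => γ ^ t * A t := by
    refine Summable.of_norm_bounded (g := fun t => Cr' * γ ^ t)
      ((summable_geometric_of_lt_one hγ0 hγ1).mul_left Cr') fun t => ?_
    rw [Real.norm_eq_abs, abs_mul, abs_pow, abs_of_nonneg hγ0, mul_comm]
    exact mul_le_mul_of_nonneg_right (hAbd t) (pow_nonneg hγ0 t)
  set c : ℕ → ℝ := fun t => γ ^ t * B t with hc
  have hsumc : Summable fun t => c (t + 1) - c t := by
    refine Summable.of_norm_bounded (g := fun t => (γ * M + M) * γ ^ t)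
      ((summable_geometric_of_lt_one hγ0 hγ1).mul_left _) fun t => ?_
    rw [Real.norm_eq_abs]
    calc |c (t + 1) - c t| ≤ |c (t + 1)| + |c t| := abs_sub _ _
      _ ≤ γ ^ (t + 1) * M + γ ^ t * M := by
          gcongr
          · rw [hc, abs_mul, abs_pow, abs_of_nonneg hγ0]
            exact mul_le_mul_of_nonneg_left (hBbd _) (pow_nonneg hγ0 _)
          · rw [hc, abs_mul, abs_pow, abs_of_nonneg hγ0]
            exact mul_le_mul_of_nonneg_left (hBbd _) (pow_nonneg hγ0 _)
      _ = (γ * M + M) * γ ^ t := by ring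
  have hctend : Filter.Tendsto c Filter.atTop (nhds 0) := by
    refine squeeze_zero_norm (a := fun t => M * γ ^ t) (fun t => ?_) ?_
    · rw [Real.norm_eq_abs, hc, abs_mul, abs_pow, abs_of_nonneg hγ0, mul_comm]
      exact mul_le_mul_of_nonneg_right (hBbd t) (pow_nonneg hγ0 t)
    · have := tendsto_pow_atTop_nhds_zero_of_lt_one hγ0 hγ1
      simpa using this.const_mul M
  have htel : ∑' t : ℕ, (c (t + 1) - c t) = -c 0 := tsum_telescope' hctend hsumc
  -- core identity: Σ γ^t ∫ h dμt = J' - J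
  have hcore : ∑' t : ℕ, γ ^ t * ∫ s, h s ∂(μ t)
      = (∫ s, valueFn γ P' r' s ∂ρ) - ∫ s, V s ∂ρ := by
    have hre : ∀ t : ℕ, γ ^ t * ∫ s, h s ∂(μ t)
        = γ ^ t * A t + (c (t + 1) - c t) := by
      intro t
      rw [hint_h t, hc]
      simp only []
      rw [pow_succ]
      ring
    calc ∑' t : ℕ, γ ^ t * ∫ s, h s ∂(μ t)
        = ∑' t : ℕ, (γ ^ t * A t + (c (t + 1) - c t)) := tsum_congr hre
      _ = (∑' t : ℕ, γ ^ t * A t) + ∑' t : ℕ, (c (t + 1) - c t) :=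
          hsumA.tsum_add hsumc
      _ = (∫ s, valueFn γ P' r' s ∂ρ) - ∫ s, V s ∂ρ := by
          rw [hJ', htel, hJ, hc]
          ring
  -- RHS computation
  have hRHS : ∫ s, h s ∂(dvisit γ P' ρ)
      = (1 - γ) * ∑' t : ℕ, γ ^ t * ∫ s, h s ∂(μ t) := by
    set ν : ℕ → Measure S := fun t => ENNReal.ofReal (γ ^ t) • (μ t) with hν
    have hsumν : dvisit γ P' ρ = ENNReal.ofReal (1 - γ) • Measure.sum ν := rfl
    have hγlt : ENNReal.ofReal γ < 1 := by
      rw [← ENNReal.ofReal_one]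
      exact ENNReal.ofReal_lt_ofReal_iff one_pos |>.mpr hγ1
    haveI : IsFiniteMeasure (Measure.sum ν) := by
      constructor
      rw [Measure.sum_apply _ MeasurableSet.univ]
      have : ∀ t : ℕ, ν t Set.univ = ENNReal.ofReal γ ^ t := by
        intro t
        haveI := hμprob t
        rw [hν]
        simp [ENNReal.ofReal_pow hγ0]
      rw [tsum_congr this, ENNReal.tsum_geometric]
      exact ENNReal.inv_lt_top.mpr (tsub_pos_of_lt hγlt)
    have hint : Integrable h (Measure.sum ν) :=
      integrable_of_bounded hhsm.aestronglyMeasurable hhbd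
    rw [hsumν, integral_smul_measure, ENNReal.toReal_ofReal (le_of_lt h1γ), smul_eq_mul,
      integral_sum_measure hint]
    congr 1
    refine tsum_congr fun t => ?_
    show ∫ a, h a ∂(ENNReal.ofReal (γ ^ t) • μ t) = _
    rw [integral_smul_measure, ENNReal.toReal_ofReal (pow_nonneg hγ0 t), smul_eq_mul]
  rw [hRHS, hcore.symm, ← mul_assoc]
  rw [one_div, inv_mul_cancel₀ (ne_of_gt h1γ), one_mul]
end

section
/- Let k be a positive semidefinite kernel on a set S, let x_1, …, x_T ∈ S and σ > 0, and define the GP posterior variance σ_t²(s) for 0 ≤ t ≤ T as in the context. Then the determinant of the regularized Gram matrix factors over the sequential posterior variances: det( I_T + σ^{−2} K_T ) = Π_{t=1}^{T} ( 1 + σ^{−2} σ_{t−1}²(x_t) ). -/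
open Matrix

/-- A symmetric positive semidefinite kernel on a set `S`: symmetric, and every finite
Gram matrix is positive semidefinite. -/
def IsPSDKernel {S : Type*} (k : S → S → ℝ) : Prop :=
  (∀ x y, k x y = k y x) ∧
    ∀ (n : ℕ) (x : Fin n → S), (Matrix.of fun i j => k (x i) (x j)).PosSemidef

/-- Regularized Gram matrix `K_t + σ² I` of the first `t` points. -/
noncomputable def gramReg {S : Type*} (k : S → S → ℝ) (σ : ℝ) {T : ℕ} (x : Fin T → S)
    (t : ℕ) (ht : t ≤ T) : Matrix (Fin t) (Fin t) ℝ :=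
  (Matrix.of fun i j => k (x (Fin.castLE ht i)) (x (Fin.castLE ht j)))
    + σ ^ 2 • (1 : Matrix (Fin t) (Fin t) ℝ)

/-- Kernel vector `k_t(s)` between a point `s` and the first `t` points. -/
noncomputable def kvec {S : Type*} (k : S → S → ℝ) {T : ℕ} (x : Fin T → S)
    (t : ℕ) (ht : t ≤ T) (s : S) : Fin t → ℝ :=
  fun i => k s (x (Fin.castLE ht i))

/-- GP posterior covariance `c_t(s,s') = k(s,s') − k_t(s)ᵀ(K_t+σ²I)⁻¹k_t(s')` after
conditioning on the first `t` points. -/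
noncomputable def postCov {S : Type*} (k : S → S → ℝ) (σ : ℝ) {T : ℕ} (x : Fin T → S)
    (t : ℕ) (ht : t ≤ T) (s s' : S) : ℝ :=
  k s s' - kvec k x t ht s ⬝ᵥ ((gramReg k σ x t ht)⁻¹ *ᵥ kvec k x t ht s')

/-- GP posterior variance `σ_t²(s) = k(s,s) − k_t(s)ᵀ(K_t+σ²I)⁻¹k_t(s)` after
conditioning on the first `t` points (so `σ_0²(s) = k(s,s)`). -/
noncomputable def postVar {S : Type*} (k : S → S → ℝ) (σ : ℝ) {T : ℕ} (x : Fin T → S)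
    (t : ℕ) (ht : t ≤ T) (s : S) : ℝ :=
  postCov k σ x t ht s s

lemma gramReg_posDef {S : Type*} (k : S → S → ℝ) (hk : IsPSDKernel k) (σ : ℝ) (hσ : 0 < σ)
    {T : ℕ} (x : Fin T → S) (t : ℕ) (ht : t ≤ T) : (gramReg k σ x t ht).PosDef := by
  have h1 := hk.2 t (fun i => x (Fin.castLE ht i))
  have h2 : (σ ^ 2 • (1 : Matrix (Fin t) (Fin t) ℝ)).PosDef := by
    have he : σ ^ 2 • (1 : Matrix (Fin t) (Fin t) ℝ)
        = Matrix.diagonal (fun _ => σ ^ 2) := by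
      ext i j
      by_cases h : i = j <;> simp [Matrix.one_apply, Matrix.diagonal_apply, h]
    rw [he]
    exact Matrix.posDef_diagonal_iff.mpr (fun _ => by positivity)
  exact Matrix.PosDef.posSemidef_add h1 h2

lemma det_gramReg_succ {S : Type*} (k : S → S → ℝ) (hk : IsPSDKernel k) (σ : ℝ) (hσ : 0 < σ)
    {T : ℕ} (x : Fin T → S) (t : ℕ) (ht : t + 1 ≤ T) :
    (gramReg k σ x (t + 1) ht).det
      = (gramReg k σ x t (Nat.le_of_succ_le ht)).det
        * (σ ^ 2 + postVar k σ x t (Nat.le_of_succ_le ht) (x (Fin.castLE ht (Fin.last t)))) := by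
  have ht' : t ≤ T := Nat.le_of_succ_le ht
  set s : S := x (Fin.castLE ht (Fin.last t)) with hs
  set A : Matrix (Fin t) (Fin t) ℝ := gramReg k σ x t ht' with hA
  have hApd : A.PosDef := gramReg_posDef k hk σ hσ x t ht'
  have : Invertible A :=
    A.invertibleOfIsUnitDet (isUnit_iff_ne_zero.mpr hApd.det_pos.ne')
  set B : Matrix (Fin t) (Fin 1) ℝ := Matrix.of fun i _ => k (x (Fin.castLE ht' i)) s with hB
  set C : Matrix (Fin 1) (Fin t) ℝ := Matrix.of fun _ j => k s (x (Fin.castLE ht' j)) with hC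
  set D : Matrix (Fin 1) (Fin 1) ℝ := Matrix.of fun _ _ => k s s + σ ^ 2 with hD
  have hM : (gramReg k σ x (t + 1) ht).det = (Matrix.fromBlocks A B C D).det := by
    rw [← Matrix.det_submatrix_equiv_self finSumFinEquiv (gramReg k σ x (t + 1) ht)]
    congr 1
    ext i j
    rcases i with i | i <;> rcases j with j | j <;>
      simp [gramReg, hA, hB, hC, hD, Matrix.one_apply, Matrix.submatrix_apply,
        Fin.ext_iff, Fin.castAdd, Fin.natAdd]
    · rw [if_neg (by omega : ¬(i : ℕ) = t), add_zero]; rfl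
    · rw [if_neg (by omega : ¬t = (j : ℕ)), add_zero]; rfl
    · rfl
  rw [hM, Matrix.det_fromBlocks₁₁, Matrix.invOf_eq_nonsing_inv, Matrix.det_fin_one]
  congr 1
  have hCAB : (C * A⁻¹ * B) 0 0
      = kvec k x t ht' s ⬝ᵥ (A⁻¹ *ᵥ kvec k x t ht' s) := by
    simp only [Matrix.mul_apply, Matrix.mulVec, dotProduct, kvec, hB, hC, Matrix.of_apply,
      Finset.sum_mul, Finset.mul_sum]
    rw [Finset.sum_comm]
    refine Finset.sum_congr rfl fun i _ => Finset.sum_congr rfl fun j _ => ?_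
    rw [hk.1 (x (Fin.castLE ht' j)) s]
    ring
  simp only [Matrix.sub_apply, hD, Matrix.of_apply, hCAB, postVar, postCov, hA]
  have : kvec k x t ht' s = kvec k x t (Nat.le_of_succ_le ht) s := rfl
  rw [← hA, hCAB]
  ring

lemma det_gramReg {S : Type*} (k : S → S → ℝ) (hk : IsPSDKernel k) (σ : ℝ) (hσ : 0 < σ)
    {T : ℕ} (x : Fin T → S) :
    ∀ (t : ℕ) (ht : t ≤ T), (gramReg k σ x t ht).det
      = ∏ i : Fin t, (σ ^ 2 + postVar k σ x i.val (le_trans i.isLt.le ht) (x (Fin.castLE ht i)))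
  | 0, ht => by simp [gramReg]
  | (t + 1), ht => by
    rw [det_gramReg_succ k hk σ hσ x t ht,
      det_gramReg k hk σ hσ x t (Nat.le_of_succ_le ht), Fin.prod_univ_castSucc]
    rfl

/-- The determinant of the regularized Gram matrix factors over the
sequential posterior variances:
`det(I_T + σ⁻² K_T) = Π_{t=1}^T (1 + σ⁻² σ_{t−1}²(x_t))`. -/
theorem stmt11 {S : Type*} (k : S → S → ℝ) (hk : IsPSDKernel k)
    (σ : ℝ) (hσ : 0 < σ) (T : ℕ) (x : Fin T → S) :
    ((1 : Matrix (Fin T) (Fin T) ℝ) + (σ ^ 2)⁻¹ • Matrix.of fun i j => k (x i) (x j)).det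
      = ∏ i : Fin T, (1 + (σ ^ 2)⁻¹ * postVar k σ x i.val i.isLt.le (x i)) := by
  have hσ2 : (σ ^ 2 : ℝ) ≠ 0 := by positivity
  have hLHS : (1 : Matrix (Fin T) (Fin T) ℝ) + (σ ^ 2)⁻¹ • Matrix.of (fun i j => k (x i) (x j))
      = (σ ^ 2)⁻¹ • gramReg k σ x T le_rfl := by
    rw [gramReg, smul_add, smul_smul, inv_mul_cancel₀ hσ2, one_smul, add_comm]
    rfl
  rw [hLHS, Matrix.det_smul, det_gramReg k hk σ hσ x T le_rfl, Fintype.card_fin,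
    ← Fin.prod_const T ((σ ^ 2)⁻¹ : ℝ), ← Finset.prod_mul_distrib]
  refine Finset.prod_congr rfl fun i _ => ?_
  have h1 : x (Fin.castLE le_rfl i) = x i := rfl
  rw [h1]
  field_simp
end

section
/- Let T and d be positive natural numbers, σ > 0 a real number, and X a T × d real matrix each of whose rows has Euclidean norm at most 1. Then (1/2)·log det( I_T + σ^{−2} X Xᵀ ) ≤ (d/2) · log( 1 + T/(σ²·d) ). -/
open Matrix

/-- Trace of a real hermitian matrix is the sum of its eigenvalues. -/
lemma trace_eq_sum_eigs {n : Type*} [Fintype n] [DecidableEq n]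
    {A : Matrix n n ℝ} (hA : A.IsHermitian) :
    A.trace = ∑ i, hA.eigenvalues i := by
  conv_lhs => rw [hA.spectral_theorem, Unitary.conjStarAlgAut_apply]
  rw [Matrix.trace_mul_cycle,
    (Matrix.mem_unitaryGroup_iff').mp (Matrix.IsHermitian.eigenvectorUnitary hA).2,
    Matrix.one_mul, Matrix.trace_diagonal]
  simp

/-- AM-GM for determinants: det of a positive definite real matrix is at most
`(trace/d)^d`. -/
lemma det_le_trace_div_pow {n : Type*} [Fintype n] [DecidableEq n] [Nonempty n]
    {A : Matrix n n ℝ} (hA : A.PosDef) :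
    A.det ≤ (A.trace / Fintype.card n) ^ (Fintype.card n) := by
  set μ := hA.isHermitian.eigenvalues with hμ
  have hμpos : ∀ i, 0 < μ i := fun i => hA.eigenvalues_pos i
  have hdet : A.det = ∏ i, μ i := by
    simpa using hA.isHermitian.det_eq_prod_eigenvalues
  have htr : A.trace = ∑ i, μ i := trace_eq_sum_eigs hA.isHermitian
  have hcard : (0 : ℝ) < Fintype.card n := by
    exact_mod_cast Fintype.card_pos
  have hsumw : (0 : ℝ) < ∑ _i : n, (1 : ℝ) := by simpa using hcard
  have h := Real.geom_mean_le_arith_mean (Finset.univ : Finset n) (fun _ => (1 : ℝ)) μ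
    (fun _ _ => zero_le_one) hsumw (fun i _ => (hμpos i).le)
  simp only [Real.rpow_one, one_mul] at h
  -- h : (∏ i, μ i) ^ (∑ 1)⁻¹ ≤ (∑ μ) / (∑ 1)
  have hsum1 : (∑ _i : n, (1 : ℝ)) = (Fintype.card n : ℝ) := by simp
  rw [hsum1] at h
  have hprodpos : (0 : ℝ) < ∏ i, μ i := Finset.prod_pos (fun i _ => hμpos i)
  have h2 : ((∏ i, μ i) ^ ((Fintype.card n : ℝ))⁻¹) ^ (Fintype.card n : ℝ)
      ≤ ((∑ i, μ i) / (Fintype.card n : ℝ)) ^ (Fintype.card n : ℝ) := by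
    apply Real.rpow_le_rpow (Real.rpow_nonneg hprodpos.le _) h hcard.le
  rw [← Real.rpow_mul hprodpos.le, inv_mul_cancel₀ (ne_of_gt hcard),
    Real.rpow_one, Real.rpow_natCast] at h2
  rw [hdet, htr]
  exact h2

/-- Information-gain bound for the linear kernel: if each row of the
`T × d` matrix `X` has Euclidean norm at most `1`, then
`(1/2)·log det(I_T + σ⁻² X Xᵀ) ≤ (d/2)·log(1 + T/(σ² d))`. -/
theorem stmt14 (T d : ℕ) (hT : 0 < T) (hd : 0 < d) (σ : ℝ) (hσ : 0 < σ)
    (X : Matrix (Fin T) (Fin d) ℝ)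
    (hrows : ∀ i : Fin T, Real.sqrt (∑ j : Fin d, X i j ^ 2) ≤ 1) :
    (1 / 2) * Real.log ((1 + (σ ^ 2)⁻¹ • (X * Xᵀ)).det)
      ≤ ((d : ℝ) / 2) * Real.log (1 + (T : ℝ) / (σ ^ 2 * d)) := by
  have hd' : Nonempty (Fin d) := ⟨⟨0, hd⟩⟩
  set c : ℝ := (σ ^ 2)⁻¹ with hc
  have hcpos : 0 < c := by positivity
  -- Weinstein–Aronszajn: swap to the d×d matrix
  have hdetswap : (1 + c • (X * Xᵀ)).det = (1 + c • (Xᵀ * X)).det := by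
    rw [show c • (X * Xᵀ) = X * (c • Xᵀ) by rw [Matrix.mul_smul],
      Matrix.det_one_add_mul_comm, Matrix.smul_mul]
  set M : Matrix (Fin d) (Fin d) ℝ := 1 + c • (Xᵀ * X) with hM
  -- M is positive definite
  have hPSD : (c • (Xᵀ * X)).PosSemidef := by
    have h1 : c • (Xᵀ * X) = (Real.sqrt c • X)ᵀ * (Real.sqrt c • X) := by
      rw [Matrix.transpose_smul, Matrix.smul_mul, Matrix.mul_smul, smul_smul,
        Real.mul_self_sqrt hcpos.le]
    rw [h1]
    have := Matrix.posSemidef_conjTranspose_mul_self (Real.sqrt c • X)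
    rwa [Matrix.conjTranspose_eq_transpose_of_trivial] at this
  have hPD : M.PosDef := Matrix.PosDef.one.add_posSemidef hPSD
  -- trace bound
  have htrXtX : Matrix.trace (Xᵀ * X) ≤ (T : ℝ) := by
    have hrow : ∀ i : Fin T, (∑ j : Fin d, X i j ^ 2) ≤ 1 := by
      intro i
      have h1 := hrows i
      have h2 : (0 : ℝ) ≤ ∑ j : Fin d, X i j ^ 2 := by positivity
      nlinarith [Real.sq_sqrt h2, Real.sqrt_nonneg (∑ j : Fin d, X i j ^ 2)]
    have : Matrix.trace (Xᵀ * X) = ∑ i : Fin T, ∑ j : Fin d, X i j ^ 2 := by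
      rw [Matrix.trace]
      simp only [Matrix.diag, Matrix.mul_apply, Matrix.transpose_apply]
      rw [Finset.sum_comm]
      simp [sq]
    rw [this]
    calc ∑ i : Fin T, ∑ j : Fin d, X i j ^ 2 ≤ ∑ _i : Fin T, (1 : ℝ) :=
          Finset.sum_le_sum (fun i _ => hrow i)
      _ = (T : ℝ) := by simp
  have htrM : M.trace ≤ (d : ℝ) + c * T := by
    rw [hM, Matrix.trace_add, Matrix.trace_smul, Matrix.trace_one]
    simp only [smul_eq_mul]
    have := mul_le_mul_of_nonneg_left htrXtX hcpos.le
    simp only [Fintype.card_fin]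
    linarith
  -- combine
  have hdpos : (0 : ℝ) < d := by exact_mod_cast hd
  have hσne : σ ≠ 0 := ne_of_gt hσ
  have hR : ((d : ℝ) + c * T) / d = 1 + (T : ℝ) / (σ ^ 2 * d) := by
    rw [hc]
    field_simp
  have hdet_le : M.det ≤ (1 + (T : ℝ) / (σ ^ 2 * d)) ^ d := by
    calc M.det ≤ (M.trace / Fintype.card (Fin d)) ^ (Fintype.card (Fin d)) :=
          det_le_trace_div_pow hPD
      _ = (M.trace / d) ^ d := by rw [Fintype.card_fin]
      _ ≤ (((d : ℝ) + c * T) / d) ^ d := by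
          have htrpos : 0 < M.trace := by
            rw [trace_eq_sum_eigs hPD.isHermitian]
            exact Finset.sum_pos (fun i _ => hPD.eigenvalues_pos i) Finset.univ_nonempty
          gcongr <;> first
            | exact div_nonneg htrpos.le hdpos.le
            | exact htrM
      _ = (1 + (T : ℝ) / (σ ^ 2 * d)) ^ d := by rw [hR]
  have hdetpos : 0 < M.det := hPD.det_pos
  have hlog : Real.log ((1 + c • (X * Xᵀ)).det) ≤ (d : ℝ) * Real.log (1 + (T : ℝ) / (σ ^ 2 * d)) := by
    rw [hdetswap]
    calc Real.log M.det ≤ Real.log ((1 + (T : ℝ) / (σ ^ 2 * d)) ^ d) :=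
          Real.log_le_log hdetpos hdet_le
      _ = (d : ℝ) * Real.log (1 + (T : ℝ) / (σ ^ 2 * d)) := by rw [Real.log_pow]
  linarith
end
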